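/- Under mechanism ONE, if Property E1 holds (E_C[p | z,b,q] = E_C[p | z] ≡ p̄(z) whenever defined), then f*(z) = p̄(z) is efficiency-maximizing: EV(f) ≤ Σ_q Pr^Q(q)·max over (b,z) groups on q of b·E_C[p | b,z,q] for every f, with equality for f*. -/

import Mathlib

open Finset

/-- The group `B^q_{b,z}` of ad `i`: the ads on the same query sharing its bid and bucket. -/
noncomputable def group {n : ℕ} (b : Fin n → ℝ) (z q : Fin n → ℕ) (i : Fin n) :
    Finset (Fin n) :=
  Finset.univ.filter (fun j => q j = q i ∧ b j = b i ∧ z j = z i)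

/-- `E_C[p | b,z,q]`: the unweighted mean CTR over the group of ad `i`. -/
noncomputable def groupMean {n : ℕ} (p b : Fin n → ℝ) (z q : Fin n → ℕ) (i : Fin n) : ℝ :=
  (∑ j ∈ group b z q i, p j) / ((group b z q i).card : ℝ)

/-- The ads that can show on query `q'` under map `f` (mechanism ONE): those maximizing
`b i * f (z i)` among the candidates for `q'`; one of them is chosen uniformly. -/
noncomputable def shownOn {n : ℕ} (b : Fin n → ℝ) (z q : Fin n → ℕ) (f : ℕ → ℝ)
    (q' : ℕ) : Finset (Fin n) :=
  Finset.univ.filter (fun i => q i = q' ∧ ∀ j, q j = q' → b j * f (z j) ≤ b i * f (z i))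

/-- `EV(f) = Σ_q Pr^Q(q) Σ_i Pr_f(i|q) p_i b_i` under mechanism ONE. -/
noncomputable def EVone {n : ℕ} (p b : Fin n → ℝ) (z q : Fin n → ℕ) (PrQ : ℕ → ℝ)
    (f : ℕ → ℝ) : ℝ :=
  ∑ q' ∈ Finset.image q Finset.univ,
    PrQ q' * ((∑ i ∈ shownOn b z q f q', p i * b i) / ((shownOn b z q f q').card : ℝ))

lemma mem_group_iff {n : ℕ} (b : Fin n → ℝ) (z q : Fin n → ℕ) (i j : Fin n) :
    j ∈ group b z q i ↔ q j = q i ∧ b j = b i ∧ z j = z i := by simp [group]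

lemma self_mem_group {n : ℕ} (b : Fin n → ℝ) (z q : Fin n → ℕ) (i : Fin n) :
    i ∈ group b z q i := by simp [group]

lemma group_eq {n : ℕ} (b : Fin n → ℝ) (z q : Fin n → ℕ) {i j : Fin n}
    (h : j ∈ group b z q i) : group b z q j = group b z q i := by
  rw [mem_group_iff] at h
  unfold group
  ext k
  simp [h.1, h.2.1, h.2.2]

lemma group_card_ne {n : ℕ} (b : Fin n → ℝ) (z q : Fin n → ℕ) (j : Fin n) :
    ((group b z q j).card : ℝ) ≠ 0 := by
  have := Finset.card_pos.mpr ⟨j, self_mem_group b z q j⟩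
  exact_mod_cast this.ne'

lemma sum_pb_eq {n : ℕ} (p b : Fin n → ℝ) (z q : Fin n → ℕ) (S : Finset (Fin n))
    (hS : ∀ i ∈ S, group b z q i ⊆ S) :
    ∑ i ∈ S, b i * groupMean p b z q i = ∑ i ∈ S, p i * b i := by
  calc ∑ i ∈ S, b i * groupMean p b z q i
      = ∑ i ∈ S, ∑ j ∈ group b z q i, (p j * b j) / ((group b z q j).card : ℝ) := by
        refine Finset.sum_congr rfl fun i _ => ?_
        have h1 : ∑ j ∈ group b z q i, (p j * b j) / ((group b z q j).card : ℝ)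
            = ∑ j ∈ group b z q i, (p j * b i) / ((group b z q i).card : ℝ) := by
          refine Finset.sum_congr rfl fun j hj => ?_
          rw [((mem_group_iff b z q i j).mp hj).2.1, group_eq b z q hj]
        rw [h1, ← Finset.sum_div, ← Finset.sum_mul, groupMean]
        ring
    _ = ∑ i ∈ S, ∑ j ∈ S, if j ∈ group b z q i then (p j * b j) / ((group b z q j).card : ℝ) else 0 := by
        refine Finset.sum_congr rfl fun i hi => ?_
        rw [← Finset.sum_filter, Finset.filter_mem_eq_inter,
          Finset.inter_eq_right.mpr (hS i hi)]
    _ = ∑ j ∈ S, ∑ i ∈ S, if j ∈ group b z q i then (p j * b j) / ((group b z q j).card : ℝ) else 0 :=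
        Finset.sum_comm
    _ = ∑ j ∈ S, p j * b j := by
        refine Finset.sum_congr rfl fun j hj => ?_
        have hiff : ∀ i : Fin n, (j ∈ group b z q i ↔ i ∈ group b z q j) := by
          intro i
          constructor <;> intro h <;>
            · rw [mem_group_iff] at h ⊢
              exact ⟨h.1.symm, h.2.1.symm, h.2.2.symm⟩
        have : ∀ i ∈ S, (if j ∈ group b z q i then (p j * b j) / ((group b z q j).card : ℝ) else 0)
            = (if i ∈ group b z q j then (p j * b j) / ((group b z q j).card : ℝ) else 0) := by
          intro i _
          exact if_congr (hiff i) rfl rfl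
        rw [Finset.sum_congr rfl this, ← Finset.sum_filter, Finset.filter_mem_eq_inter,
          Finset.inter_eq_right.mpr (hS j hj), Finset.sum_const, nsmul_eq_mul, mul_comm,
          div_mul_cancel₀ _ (group_card_ne b z q j)]

lemma shownOn_group_subset {n : ℕ} (b : Fin n → ℝ) (z q : Fin n → ℕ) (f : ℕ → ℝ) (q' : ℕ)
    {i : Fin n} (hi : i ∈ shownOn b z q f q') : group b z q i ⊆ shownOn b z q f q' := by
  intro j hj
  simp only [shownOn, mem_filter, mem_univ, true_and] at hi ⊢
  rw [mem_group_iff] at hj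
  refine ⟨hj.1.trans hi.1, fun k hk => ?_⟩
  rw [hj.2.1, hj.2.2]
  exact hi.2 k hk

lemma main_per_query {n : ℕ} (p b : Fin n → ℝ) (z q : Fin n → ℕ) (pbar : ℕ → ℝ)
    (hE1 : ∀ i : Fin n, groupMean p b z q i = pbar (z i)) (q' : ℕ)
    (h : ∃ i0 : Fin n, q i0 = q') :
    (∀ f : ℕ → ℝ, (∑ i ∈ shownOn b z q f q', p i * b i) / ((shownOn b z q f q').card : ℝ)
        ≤ (∑ i ∈ shownOn b z q pbar q', p i * b i) / ((shownOn b z q pbar q').card : ℝ)) ∧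
    IsGreatest {v : ℝ | ∃ i : Fin n, q i = q' ∧ v = b i * groupMean p b z q i}
        ((∑ i ∈ shownOn b z q pbar q', p i * b i) / ((shownOn b z q pbar q').card : ℝ)) := by
  obtain ⟨i0, h0⟩ := h
  have hC : ((Finset.univ.filter fun i => q i = q') : Finset (Fin n)).Nonempty :=
    ⟨i0, by simp [h0]⟩
  obtain ⟨m, hmC, hmax'⟩ := Finset.exists_max_image _ (fun i => b i * pbar (z i)) hC
  simp only [mem_filter, mem_univ, true_and] at hmC
  have hmax : ∀ j : Fin n, q j = q' → b j * pbar (z j) ≤ b m * pbar (z m) := by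
    intro j hj; exact hmax' j (by simp [hj])
  set M := b m * pbar (z m) with hM
  -- shownOn f is nonempty for all f
  have hne : ∀ f : ℕ → ℝ, (shownOn b z q f q').Nonempty := by
    intro f
    obtain ⟨w, hwC, hwmax⟩ := Finset.exists_max_image _ (fun i => b i * f (z i)) hC
    simp only [mem_filter, mem_univ, true_and] at hwC
    exact ⟨w, by
      simp only [shownOn, mem_filter, mem_univ, true_and]
      exact ⟨hwC, fun j hj => hwmax j (by simp [hj])⟩⟩
  have hmemq : ∀ f : ℕ → ℝ, ∀ i ∈ shownOn b z q f q', q i = q' := by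
    intro f i hi
    simp only [shownOn, mem_filter, mem_univ, true_and] at hi
    exact hi.1
  have hsum : ∀ f : ℕ → ℝ, ∑ i ∈ shownOn b z q f q', p i * b i
      = ∑ i ∈ shownOn b z q f q', b i * pbar (z i) := by
    intro f
    rw [← sum_pb_eq p b z q _ (fun i hi => shownOn_group_subset b z q f q' hi)]
    exact Finset.sum_congr rfl fun i _ => by rw [hE1]
  have hcardpos : ∀ f : ℕ → ℝ, (0:ℝ) < ((shownOn b z q f q').card : ℝ) := by
    intro f
    exact_mod_cast Finset.card_pos.mpr (hne f)
  -- m is shown under pbar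
  have hmS : m ∈ shownOn b z q pbar q' := by
    simp only [shownOn, mem_filter, mem_univ, true_and]
    exact ⟨hmC, hmax⟩
  -- every shown element under pbar attains M
  have hattain : ∀ i ∈ shownOn b z q pbar q', b i * pbar (z i) = M := by
    intro i hi
    have h1 := hmax i (hmemq pbar i hi)
    simp only [shownOn, mem_filter, mem_univ, true_and] at hi
    exact le_antisymm h1 (hi.2 m hmC)
  have havg : (∑ i ∈ shownOn b z q pbar q', p i * b i) / ((shownOn b z q pbar q').card : ℝ) = M := by
    rw [hsum pbar, Finset.sum_congr rfl hattain, Finset.sum_const, nsmul_eq_mul]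
    field_simp
  constructor
  · intro f
    rw [havg, div_le_iff₀ (hcardpos f), hsum f]
    calc ∑ i ∈ shownOn b z q f q', b i * pbar (z i)
        ≤ ∑ _i ∈ shownOn b z q f q', M :=
          Finset.sum_le_sum fun i hi => hmax i (hmemq f i hi)
      _ = M * ((shownOn b z q f q').card : ℝ) := by
          rw [Finset.sum_const, nsmul_eq_mul, mul_comm]
  · constructor
    · exact ⟨m, hmC, by rw [havg, hE1 m]⟩
    · rintro v ⟨i, hqi, hv⟩
      rw [havg, hv, hE1 i]
      exact hmax i hqi

/-- Mechanism ONE.  If Property E1 holds — `E_C[p | z,b,q] = pbar z` whenever the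
group is nonempty — then `fstar = pbar` is efficiency-maximizing: every map `f` has
`EV(f) ≤ EV(fstar)`, and on each query `fstar` attains the bound
`max over (b,z)-groups of b * E_C[p | b,z,q]`. -/
theorem propE1_implies_fstar_efficiency_maximizing_ONE (n : ℕ)
    (p b : Fin n → ℝ) (z q : Fin n → ℕ) (PrQ : ℕ → ℝ)
    (hp : ∀ i, 0 ≤ p i ∧ p i ≤ 1) (hb : ∀ i, 0 < b i) (hPrQ : ∀ q', 0 ≤ PrQ q')
    (pbar : ℕ → ℝ)
    (hE1 : ∀ i : Fin n, groupMean p b z q i = pbar (z i)) :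
    (∀ f : ℕ → ℝ, EVone p b z q PrQ f ≤ EVone p b z q PrQ pbar) ∧
    (∀ q' ∈ Finset.image q Finset.univ,
      IsGreatest {v : ℝ | ∃ i : Fin n, q i = q' ∧ v = b i * groupMean p b z q i}
        ((∑ i ∈ shownOn b z q pbar q', p i * b i) / ((shownOn b z q pbar q').card : ℝ))) := by
  constructor
  · intro f
    refine Finset.sum_le_sum fun q' hq' => ?_
    obtain ⟨i0, _, h0⟩ := Finset.mem_image.mp hq'
    exact mul_le_mul_of_nonneg_left
      ((main_per_query p b z q pbar hE1 q' ⟨i0, h0⟩).1 f) (hPrQ q')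
  · intro q' hq'
    obtain ⟨i0, _, h0⟩ := Finset.mem_image.mp hq'
    exact (main_per_query p b z q pbar hE1 q' ⟨i0, h0⟩).2
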